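/- A bicomplex matrix A ∈ BC^{n×n} is hyperbolic positive if and only if A = B^{*t}·B for some bicomplex matrix B ∈ BC^{m×n}, if and only if A = C² for some hyperbolic positive matrix C. -/

import Mathlib

@[ext] structure BC where
  z1 : ℂ
  z2 : ℂ

namespace BC

instance : Zero BC := ⟨⟨0, 0⟩⟩
instance : One BC := ⟨⟨1, 0⟩⟩
instance : Add BC := ⟨fun Z W => ⟨Z.z1 + W.z1, Z.z2 + W.z2⟩⟩
instance : Neg BC := ⟨fun Z => ⟨-Z.z1, -Z.z2⟩⟩
instance : Mul BC := ⟨fun Z W => ⟨Z.z1 * W.z1 - Z.z2 * W.z2, Z.z1 * W.z2 + Z.z2 * W.z1⟩⟩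

@[simp] lemma zero_z1 : (0 : BC).z1 = 0 := rfl
@[simp] lemma zero_z2 : (0 : BC).z2 = 0 := rfl
@[simp] lemma one_z1 : (1 : BC).z1 = 1 := rfl
@[simp] lemma one_z2 : (1 : BC).z2 = 0 := rfl
@[simp] lemma add_z1 (Z W : BC) : (Z + W).z1 = Z.z1 + W.z1 := rfl
@[simp] lemma add_z2 (Z W : BC) : (Z + W).z2 = Z.z2 + W.z2 := rfl
@[simp] lemma neg_z1 (Z : BC) : (-Z).z1 = -Z.z1 := rfl
@[simp] lemma neg_z2 (Z : BC) : (-Z).z2 = -Z.z2 := rfl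
@[simp] lemma mul_z1 (Z W : BC) : (Z * W).z1 = Z.z1 * W.z1 - Z.z2 * W.z2 := rfl
@[simp] lemma mul_z2 (Z W : BC) : (Z * W).z2 = Z.z1 * W.z2 + Z.z2 * W.z1 := rfl

instance : CommRing BC where
  add_assoc a b c := by ext <;> simp <;> ring
  zero_add a := by ext <;> simp
  add_zero a := by ext <;> simp
  add_comm a b := by ext <;> simp <;> ring
  neg_add_cancel a := by ext <;> simp
  mul_assoc a b c := by ext <;> simp <;> ring
  one_mul a := by ext <;> simp
  mul_one a := by ext <;> simp
  left_distrib a b c := by ext <;> simp <;> ring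
  right_distrib a b c := by ext <;> simp <;> ring
  mul_comm a b := by ext <;> simp <;> ring
  zero_mul a := by ext <;> simp
  mul_zero a := by ext <;> simp
  nsmul := nsmulRec
  zsmul := zsmulRec

/-- Euclidean norm of a bicomplex number. -/
noncomputable def enorm (Z : BC) : ℝ :=
  Real.sqrt (‖Z.z1‖ ^ 2 + ‖Z.z2‖ ^ 2)

/-- Embedding of ℂ(𝐢) into BC. -/
def ofC (z : ℂ) : BC := ⟨z, 0⟩

/-- Embedding of ℝ into BC. -/
noncomputable def ofR (r : ℝ) : BC := ⟨(r : ℂ), 0⟩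

/-- The idempotent 𝐞 = (1 + 𝐢𝐣)/2. -/
noncomputable def e : BC := ⟨1 / 2, Complex.I / 2⟩

/-- The idempotent 𝐞† = (1 - 𝐢𝐣)/2. -/
noncomputable def edag : BC := ⟨1 / 2, -(Complex.I / 2)⟩

/-- First idempotent component β₁ = z₁ - 𝐢 z₂. -/
def beta1 (Z : BC) : ℂ := Z.z1 - Complex.I * Z.z2

/-- Second idempotent component β₂ = z₁ + 𝐢 z₂. -/
def beta2 (Z : BC) : ℂ := Z.z1 + Complex.I * Z.z2

/-- The †-conjugation. -/
def dag (Z : BC) : BC := ⟨Z.z1, -Z.z2⟩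

/-- The *-conjugation. -/
def bstar (Z : BC) : BC := ⟨(starRingEnd ℂ) Z.z1, -((starRingEnd ℂ) Z.z2)⟩

/-- The set 𝔻⁺ of positive hyperbolic numbers. -/
def Dpos : Set BC :=
  {Z | ∃ ν μ : ℝ, 0 ≤ ν ∧ 0 ≤ μ ∧ Z = ofR ν * e + ofR μ * edag}

/-- Partial order induced by 𝔻⁺. -/
def hle (Z W : BC) : Prop := W - Z ∈ Dpos

/-- Hyperbolic-valued norm |Z|ₖ = |β₁|𝐞 + |β₂|𝐞†. -/
noncomputable def hnorm (Z : BC) : BC :=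
  ofR ‖beta1 Z‖ * e + ofR ‖beta2 Z‖ * edag

/-- Z is a hyperbolic number: Z = x₁ + y₂ 𝐢𝐣. -/
def isHyp (Z : BC) : Prop := Z.z1.im = 0 ∧ Z.z2.re = 0


/-- Bicomplex matrix from its idempotent components. -/
noncomputable def idemMat {n : ℕ} (A1 A2 : Matrix (Fin n) (Fin n) ℂ) :
    Matrix (Fin n) (Fin n) BC :=
  fun i j => ofC (A1 i j) * e + ofC (A2 i j) * edag

/-- The *-conjugate transpose of a bicomplex matrix. -/
def cstar {m n : ℕ} (A : Matrix (Fin m) (Fin n) BC) : Matrix (Fin n) (Fin m) BC :=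
  fun i j => bstar (A j i)

/-- The quadratic form c^{*t} · A · c. -/
def quadForm {n : ℕ} (A : Matrix (Fin n) (Fin n) BC) (c : Fin n → BC) : BC :=
  ∑ i, ∑ j, bstar (c i) * A i j * c j

/-- A is hyperbolic positive: *-self-adjoint with c^{*t}Ac ∈ 𝔻⁺ for all columns c. -/
def HypPos {n : ℕ} (A : Matrix (Fin n) (Fin n) BC) : Prop :=
  cstar A = A ∧ ∀ c : Fin n → BC, quadForm A c ∈ Dpos

/-! ### Auxiliary development -/

open scoped ComplexOrder
open Matrix
open scoped MatrixOrder

lemma psd_exists_conj {n : ℕ} {M : Matrix (Fin n) (Fin n) ℂ} (h : M.PosSemidef) :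
    ∃ B : Matrix (Fin n) (Fin n) ℂ, M = Bᴴ * B :=
  ⟨CFC.sqrt M, by rw [(CFC.sqrt_nonneg M).posSemidef.1.eq, CFC.sqrt_mul_sqrt_self M h.nonneg]⟩

/-- β₁ as a ring homomorphism. -/
def beta1Hom : BC →+* ℂ where
  toFun := beta1
  map_one' := by simp [beta1]
  map_mul' Z W := by
    simp only [beta1, mul_z1, mul_z2]
    linear_combination (-(Z.z2 * W.z2)) * Complex.I_sq
  map_zero' := by simp [beta1]
  map_add' Z W := by simp [beta1]; ring

/-- β₂ as a ring homomorphism. -/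
def beta2Hom : BC →+* ℂ where
  toFun := beta2
  map_one' := by simp [beta2]
  map_mul' Z W := by
    simp only [beta2, mul_z1, mul_z2]
    linear_combination (-(Z.z2 * W.z2)) * Complex.I_sq
  map_zero' := by simp [beta2]
  map_add' Z W := by simp [beta2]; ring

@[simp] lemma beta1Hom_apply (Z : BC) : beta1Hom Z = beta1 Z := rfl
@[simp] lemma beta2Hom_apply (Z : BC) : beta2Hom Z = beta2 Z := rfl

lemma beta_ext {Z W : BC} (h1 : beta1 Z = beta1 W) (h2 : beta2 Z = beta2 W) : Z = W := by
  simp only [beta1, beta2] at h1 h2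
  have h3 : Complex.I * Z.z2 = Complex.I * W.z2 := by linear_combination (h2 - h1) / 2
  ext
  · linear_combination (h1 + h2) / 2
  · exact mul_left_cancel₀ Complex.I_ne_zero h3

/-- Build a bicomplex number from its idempotent components. -/
noncomputable def fromB (a b : ℂ) : BC := ofC a * e + ofC b * edag

lemma beta1_fromB (a b : ℂ) : beta1 (fromB a b) = a := by
  simp only [fromB, beta1, add_z1, add_z2, mul_z1, mul_z2, ofC, e, edag]
  linear_combination (b / 2 - a / 2) * Complex.I_sq

lemma beta2_fromB (a b : ℂ) : beta2 (fromB a b) = b := by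
  simp only [fromB, beta2, add_z1, add_z2, mul_z1, mul_z2, ofC, e, edag]
  linear_combination (a / 2 - b / 2) * Complex.I_sq

lemma ofR_eq_ofC (r : ℝ) : ofR r = ofC (r : ℂ) := rfl

lemma mem_Dpos_iff {Z : BC} :
    Z ∈ Dpos ↔ (0 ≤ beta1Hom Z ∧ 0 ≤ beta2Hom Z) := by
  simp only [beta1Hom_apply, beta2Hom_apply]
  constructor
  · rintro ⟨ν, μ, hν, hμ, rfl⟩
    have h1 : beta1 (ofR ν * e + ofR μ * edag) = (ν : ℂ) := beta1_fromB _ _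
    have h2 : beta2 (ofR ν * e + ofR μ * edag) = (μ : ℂ) := beta2_fromB _ _
    rw [h1, h2]
    constructor
    · exact_mod_cast hν
    · exact_mod_cast hμ
  · rintro ⟨h1, h2⟩
    rw [Complex.nonneg_iff] at h1 h2
    refine ⟨(beta1 Z).re, (beta2 Z).re, h1.1, h2.1, ?_⟩
    refine beta_ext ?_ ?_
    · rw [show (ofR (beta1 Z).re * e + ofR (beta2 Z).re * edag : BC) = fromB _ _ from rfl,
        beta1_fromB]
      exact Complex.ext (by simp) (by simp [← h1.2])
    · rw [show (ofR (beta1 Z).re * e + ofR (beta2 Z).re * edag : BC) = fromB _ _ from rfl,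
        beta2_fromB]
      exact Complex.ext (by simp) (by simp [← h2.2])

lemma beta1_bstar (Z : BC) : beta1 (bstar Z) = star (beta1 Z) := by
  simp only [beta1, bstar, Complex.star_def, _root_.map_sub, _root_.map_mul, Complex.conj_I]
  ring

lemma beta2_bstar (Z : BC) : beta2 (bstar Z) = star (beta2 Z) := by
  simp only [beta2, bstar, Complex.star_def, _root_.map_add, _root_.map_mul, Complex.conj_I]
  ring

lemma mat_beta_ext {m n : ℕ} {A B : Matrix (Fin m) (Fin n) BC}
    (h1 : A.map beta1Hom = B.map beta1Hom) (h2 : A.map beta2Hom = B.map beta2Hom) : A = B := by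
  refine Matrix.ext fun i j => ?_
  have e1 := congrFun (congrFun h1 i) j
  have e2 := congrFun (congrFun h2 i) j
  simp only [Matrix.map_apply, beta1Hom_apply, beta2Hom_apply] at e1 e2
  exact beta_ext e1 e2

lemma cstar_map (f : BC →+* ℂ) (hf : ∀ Z, f (bstar Z) = star (f Z))
    {m n : ℕ} (B : Matrix (Fin m) (Fin n) BC) :
    (cstar B).map f = (B.map f)ᴴ := by
  ext i j : 2
  simp [cstar, Matrix.map_apply, Matrix.conjTranspose_apply, hf]

lemma quadForm_hom (f : BC →+* ℂ) (hf : ∀ Z, f (bstar Z) = star (f Z))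
    {n : ℕ} (A : Matrix (Fin n) (Fin n) BC) (c : Fin n → BC) :
    f (quadForm A c) =
      dotProduct (star fun i => f (c i)) ((A.map f) *ᵥ fun i => f (c i)) := by
  simp only [quadForm, map_sum, _root_.map_mul, hf, dotProduct, Matrix.mulVec, Matrix.map_apply,
    Pi.star_apply, Finset.mul_sum]
  refine Finset.sum_congr rfl fun i _ => Finset.sum_congr rfl fun j _ => by ring

lemma map_idemMat1 {n : ℕ} (A1 A2 : Matrix (Fin n) (Fin n) ℂ) :
    (idemMat A1 A2).map beta1Hom = A1 := by
  ext i j : 2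
  exact beta1_fromB _ _

lemma map_idemMat2 {n : ℕ} (A1 A2 : Matrix (Fin n) (Fin n) ℂ) :
    (idemMat A1 A2).map beta2Hom = A2 := by
  ext i j : 2
  exact beta2_fromB _ _

lemma hypPos_iff_posSemidef {n : ℕ} (A : Matrix (Fin n) (Fin n) BC) :
    HypPos A ↔ (A.map beta1Hom).PosSemidef ∧ (A.map beta2Hom).PosSemidef := by
  constructor
  · rintro ⟨hst, hq⟩
    constructor
    · refine Matrix.PosSemidef.of_dotProduct_mulVec_nonneg ?_ ?_
      · show (A.map beta1Hom)ᴴ = A.map beta1Hom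
        rw [← cstar_map beta1Hom beta1_bstar, hst]
      · intro x
        have h := hq fun i => fromB (x i) 0
        rw [mem_Dpos_iff] at h
        have := h.1
        rw [quadForm_hom beta1Hom beta1_bstar] at this
        simpa [beta1_fromB] using this
    · refine Matrix.PosSemidef.of_dotProduct_mulVec_nonneg ?_ ?_
      · show (A.map beta2Hom)ᴴ = A.map beta2Hom
        rw [← cstar_map beta2Hom beta2_bstar, hst]
      · intro x
        have h := hq fun i => fromB 0 (x i)
        rw [mem_Dpos_iff] at h
        have := h.2
        rw [quadForm_hom beta2Hom beta2_bstar] at this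
        simpa [beta2_fromB] using this
  · rintro ⟨⟨hH1, hp1⟩, ⟨hH2, hp2⟩⟩
    constructor
    · refine mat_beta_ext ?_ ?_
      · rw [cstar_map beta1Hom beta1_bstar]; exact hH1
      · rw [cstar_map beta2Hom beta2_bstar]; exact hH2
    · intro c
      rw [mem_Dpos_iff]
      constructor
      · rw [quadForm_hom beta1Hom beta1_bstar]
        exact Matrix.PosSemidef.dotProduct_mulVec_nonneg (M := A.map beta1Hom) ⟨hH1, hp1⟩ _
      · rw [quadForm_hom beta2Hom beta2_bstar]
        exact Matrix.PosSemidef.dotProduct_mulVec_nonneg (M := A.map beta2Hom) ⟨hH2, hp2⟩ _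

theorem hyperbolic_positive_iff_factorization (n : ℕ)
    (A : Matrix (Fin n) (Fin n) BC) :
    (HypPos A ↔ ∃ (m : ℕ) (B : Matrix (Fin m) (Fin n) BC), A = cstar B * B) ∧
    (HypPos A ↔ ∃ C : Matrix (Fin n) (Fin n) BC, HypPos C ∧ A = C * C) := by
  have key : HypPos A ↔ ∃ (m : ℕ) (B : Matrix (Fin m) (Fin n) BC), A = cstar B * B := by
    rw [hypPos_iff_posSemidef]
    constructor
    · rintro ⟨hp1, hp2⟩
      obtain ⟨B1, hB1⟩ := psd_exists_conj hp1
      obtain ⟨B2, hB2⟩ := psd_exists_conj hp2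
      refine ⟨n, idemMat B1 B2, mat_beta_ext ?_ ?_⟩
      · rw [Matrix.map_mul, cstar_map beta1Hom beta1_bstar, map_idemMat1]
        exact hB1
      · rw [Matrix.map_mul, cstar_map beta2Hom beta2_bstar, map_idemMat2]
        exact hB2
    · rintro ⟨m, B, rfl⟩
      constructor
      · rw [Matrix.map_mul, cstar_map beta1Hom beta1_bstar]
        exact Matrix.posSemidef_conjTranspose_mul_self _
      · rw [Matrix.map_mul, cstar_map beta2Hom beta2_bstar]
        exact Matrix.posSemidef_conjTranspose_mul_self _
  refine ⟨key, ?_⟩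
  constructor
  · intro hA
    obtain ⟨hp1, hp2⟩ := (hypPos_iff_posSemidef A).mp hA
    refine ⟨idemMat (CFC.sqrt (A.map beta1Hom)) (CFC.sqrt (A.map beta2Hom)), ?_, ?_⟩
    · rw [hypPos_iff_posSemidef, map_idemMat1, map_idemMat2]
      exact ⟨(CFC.sqrt_nonneg _).posSemidef, (CFC.sqrt_nonneg _).posSemidef⟩
    · refine mat_beta_ext ?_ ?_
      · rw [Matrix.map_mul, map_idemMat1, CFC.sqrt_mul_sqrt_self _ hp1.nonneg]
      · rw [Matrix.map_mul, map_idemMat2, CFC.sqrt_mul_sqrt_self _ hp2.nonneg]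
  · rintro ⟨C, hC, rfl⟩
    exact key.mpr ⟨n, C, by rw [hC.1]⟩

end BC
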